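/- The equation Σ_{k=1}^{9} (1/2^k)^α = 1 has a unique solution α ∈ (0,1), and this solution satisfies 0.998 < α < 0.999. -/

import Mathlib

open Finset in
private lemma moranF_rw (α : ℝ) :
    ∑ k ∈ Finset.Icc 1 9, ((1 : ℝ) / 2 ^ k) ^ α
      = ∑ k ∈ Finset.Icc 1 9, (((1 : ℝ) / 2) ^ α) ^ k := by
  refine Finset.sum_congr rfl fun k _ => ?_
  rw [show ((1 : ℝ) / 2 ^ k) = ((1 : ℝ) / 2) ^ k by rw [div_pow]; norm_num,
    ← Real.rpow_natCast ((1 : ℝ) / 2) k, ← Real.rpow_mul (by norm_num), mul_comm,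
    Real.rpow_mul (by norm_num), Real.rpow_natCast]

private lemma moranF_strictAnti :
    StrictAnti (fun α : ℝ => ∑ k ∈ Finset.Icc 1 9, ((1 : ℝ) / 2 ^ k) ^ α) := by
  intro a b hab
  refine Finset.sum_lt_sum_of_nonempty ⟨1, by decide⟩ fun k hk => ?_
  have hk1 : 1 ≤ k := (Finset.mem_Icc.mp hk).1
  have h0 : (0 : ℝ) < 1 / 2 ^ k := by positivity
  have h1 : (1 : ℝ) / 2 ^ k < 1 := by
    rw [div_lt_one (by positivity)]
    exact one_lt_two.trans_le (le_self_pow₀ one_le_two (by omega))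
  exact (Real.rpow_lt_rpow_left_iff_of_base_lt_one h0 h1).mpr hab

private lemma moranF_continuous :
    Continuous (fun α : ℝ => ∑ k ∈ Finset.Icc 1 9, ((1 : ℝ) / 2 ^ k) ^ α) := by
  refine continuous_finset_sum _ fun k _ => ?_
  exact continuous_iff_continuousAt.mpr fun x =>
    Real.continuousAt_const_rpow (by positivity)

private lemma moran_lb : (5006 / 10000 : ℝ) < ((1 : ℝ) / 2) ^ (0.998 : ℝ) := by
  have h2 : (0 : ℝ) ≤ ((1 : ℝ) / 2) ^ (0.998 : ℝ) := Real.rpow_nonneg (by norm_num) _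
  refine lt_of_pow_lt_pow_left₀ 1000 h2 ?_
  have : (((1 : ℝ) / 2) ^ (0.998 : ℝ)) ^ (1000 : ℕ) = ((1 : ℝ) / 2) ^ (998 : ℕ) := by
    rw [← Real.rpow_natCast (((1 : ℝ) / 2) ^ (0.998 : ℝ)) 1000,
      ← Real.rpow_mul (by norm_num), show (0.998 : ℝ) * (1000 : ℕ) = ((998 : ℕ) : ℝ) by norm_num,
      Real.rpow_natCast]
  rw [this, div_pow, div_pow, div_lt_div_iff₀ (by positivity) (by positivity)]
  exact_mod_cast (by decide +kernel : (5006:ℕ) ^ 1000 * 2 ^ 998 < 1 ^ 998 * 10000 ^ 1000)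

private lemma moran_ub : ((1 : ℝ) / 2) ^ (0.999 : ℝ) < 50035 / 100000 := by
  have h2 : (0 : ℝ) ≤ (50035 / 100000 : ℝ) := by norm_num
  refine lt_of_pow_lt_pow_left₀ 1000 h2 ?_
  have : (((1 : ℝ) / 2) ^ (0.999 : ℝ)) ^ (1000 : ℕ) = ((1 : ℝ) / 2) ^ (999 : ℕ) := by
    rw [← Real.rpow_natCast (((1 : ℝ) / 2) ^ (0.999 : ℝ)) 1000,
      ← Real.rpow_mul (by norm_num), show (0.999 : ℝ) * (1000 : ℕ) = ((999 : ℕ) : ℝ) by norm_num,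
      Real.rpow_natCast]
  rw [this, div_pow, div_pow, div_lt_div_iff₀ (by positivity) (by positivity)]
  exact_mod_cast (by decide +kernel : (1:ℕ) ^ 999 * 100000 ^ 1000 < 50035 ^ 1000 * 2 ^ 999)

private lemma moranF_at_998 :
    1 < ∑ k ∈ Finset.Icc 1 9, ((1 : ℝ) / 2 ^ k) ^ (0.998 : ℝ) := by
  rw [moranF_rw]
  have hsum : (1 : ℝ) < ∑ k ∈ Finset.Icc 1 9, (5006 / 10000 : ℝ) ^ k := by
    rw [show Finset.Icc (1:ℕ) 9 = Finset.Ico 1 10 by rfl, Finset.sum_Ico_eq_sum_range]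
    norm_num [Finset.sum_range_succ]
  refine hsum.trans_le (Finset.sum_le_sum fun k _ => ?_)
  exact pow_le_pow_left₀ (by norm_num) moran_lb.le k

private lemma moranF_at_999 :
    ∑ k ∈ Finset.Icc 1 9, ((1 : ℝ) / 2 ^ k) ^ (0.999 : ℝ) < 1 := by
  rw [moranF_rw]
  have hsum : ∑ k ∈ Finset.Icc 1 9, (50035 / 100000 : ℝ) ^ k < 1 := by
    rw [show Finset.Icc (1:ℕ) 9 = Finset.Ico 1 10 by rfl, Finset.sum_Ico_eq_sum_range]
    norm_num [Finset.sum_range_succ]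
  refine lt_of_le_of_lt (Finset.sum_le_sum fun k _ => ?_) hsum
  exact pow_le_pow_left₀ (Real.rpow_nonneg (by norm_num) _) moran_ub.le k

theorem moran_equation_E9 :
    (∃! α : ℝ, α ∈ Set.Ioo (0 : ℝ) 1 ∧ ∑ k ∈ Finset.Icc 1 9, ((1 : ℝ) / 2 ^ k) ^ α = 1) ∧
    ∀ α : ℝ, α ∈ Set.Ioo (0 : ℝ) 1 → ∑ k ∈ Finset.Icc 1 9, ((1 : ℝ) / 2 ^ k) ^ α = 1 →
      0.998 < α ∧ α < 0.999 := by
  have hbounds : ∀ α : ℝ, (∑ k ∈ Finset.Icc 1 9, ((1 : ℝ) / 2 ^ k) ^ α = 1) →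
      0.998 < α ∧ α < 0.999 := by
    intro α hα
    constructor
    · by_contra h
      push_neg at h
      have := moranF_strictAnti.antitone h
      rw [hα] at this
      exact absurd (moranF_at_998.trans_le this) (lt_irrefl 1)
    · by_contra h
      push_neg at h
      have := moranF_strictAnti.antitone h
      rw [hα] at this
      exact absurd (this.trans_lt moranF_at_999) (lt_irrefl 1)
  have hex : ∃ α ∈ Set.Icc (0.998 : ℝ) 0.999,
      (fun α : ℝ => ∑ k ∈ Finset.Icc 1 9, ((1 : ℝ) / 2 ^ k) ^ α) α = 1 := by
    have h := intermediate_value_Icc' (by norm_num : (0.998 : ℝ) ≤ 0.999)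
      moranF_continuous.continuousOn
    exact h ⟨moranF_at_999.le, moranF_at_998.le⟩
  obtain ⟨α, hαmem, hαeq⟩ := hex
  simp only at hαeq
  refine ⟨⟨α, ⟨⟨by linarith [hαmem.1], by linarith [hαmem.2]⟩, hαeq⟩, ?_⟩,
    fun β _ hβ => hbounds β hβ⟩
  intro β hβ
  exact moranF_strictAnti.injective (show _ = _ from hβ.2.trans hαeq.symm)
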